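/- Let C ⊆ S_w be a configuration whose boundary positions are all nodes, and suppose the node (x, y) ∈ C with x > 0 and y > 0 is not contained in any maximal barrier of C. Then at least one of the positions (x−1, y) and (x, y−1) is not contained in any maximal barrier of C (and is therefore a node). -/

import Mathlib

def Sq (w : ℤ) : Set (ℤ × ℤ) := {p | 0 ≤ p.1 ∧ p.1 ≤ w ∧ 0 ≤ p.2 ∧ p.2 ≤ w}

def dMH (p q : ℤ × ℤ) : ℤ := |p.1 - q.1| + |p.2 - q.2|

/-- An axis-aligned rectangle in ℤ². -/
def IsRect (R : Set (ℤ × ℤ)) : Prop :=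
  ∃ x₀ x₁ y₀ y₁ : ℤ, x₀ ≤ x₁ ∧ y₀ ≤ y₁ ∧
    R = {p : ℤ × ℤ | x₀ ≤ p.1 ∧ p.1 ≤ x₁ ∧ y₀ ≤ p.2 ∧ p.2 ≤ y₁}

/-- A barrier of a configuration `C` in the square `S_w`: a nonempty rectangle
contained in `S_w` each of whose columns and rows contains a hole
(a position of `S_w` not in `C`). -/
def IsBarrier (w : ℤ) (C R : Set (ℤ × ℤ)) : Prop :=
  R.Nonempty ∧ IsRect R ∧ R ⊆ Sq w ∧
    (∀ c : ℤ, (∃ p ∈ R, p.1 = c) → ∃ p ∈ R, p.1 = c ∧ p ∉ C) ∧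
    (∀ r : ℤ, (∃ p ∈ R, p.2 = r) → ∃ p ∈ R, p.2 = r ∧ p ∉ C)

/-- A maximal barrier: a barrier not properly contained in another barrier. -/
def IsMaxBarrier (w : ℤ) (C R : Set (ℤ × ℤ)) : Prop :=
  IsBarrier w C R ∧ ∀ R', IsBarrier w C R' → R ⊆ R' → R' = R

/-- A path of length `n` inside `C` from `u` to `v`. -/
def IsPathIn (C : Set (ℤ × ℤ)) (n : ℕ) (P : ℕ → ℤ × ℤ) (u v : ℤ × ℤ) : Prop :=
  P 0 = u ∧ P n = v ∧ (∀ i < n, dMH (P i) (P (i + 1)) = 1) ∧ ∀ i ≤ n, P i ∈ C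

lemma sq_finite (w : ℤ) : (Sq w).Finite := by
  apply Set.Finite.subset (Set.finite_Icc ((0:ℤ),(0:ℤ)) (w,w))
  rintro ⟨a,b⟩ ⟨h1,h2,h3,h4⟩
  exact ⟨⟨h1,h3⟩,⟨h2,h4⟩⟩

lemma exists_max_barrier (w : ℤ) (C R : Set (ℤ × ℤ)) (hR : IsBarrier w C R) :
    ∃ M, IsMaxBarrier w C M ∧ R ⊆ M := by
  have hfin : {R' | IsBarrier w C R' ∧ R ⊆ R'}.Finite :=
    Set.Finite.subset (sq_finite w).finite_subsets (fun R' hR' => hR'.1.2.2.1)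
  obtain ⟨M, hM, hmax⟩ := hfin.exists_maximalFor id _ ⟨R, hR, subset_rfl⟩
  exact ⟨M, ⟨hM.1, fun R' hR' hMR' => Set.Subset.antisymm (hmax ⟨hR', hM.2.trans hMR'⟩ hMR') hMR'⟩, hM.2⟩

/-- If a node (x, y) with x > 0, y > 0 is not in any maximal barrier, then at
least one of (x-1, y), (x, y-1) is not in any maximal barrier (hence a node). -/
theorem stmt9 (w : ℤ) (C : Set (ℤ × ℤ)) (hC : C ⊆ Sq w)
    (hbd : ∀ p ∈ Sq w, (p.1 = 0 ∨ p.1 = w ∨ p.2 = 0 ∨ p.2 = w) → p ∈ C)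
    (x y : ℤ) (hv : (x, y) ∈ C) (hx : 0 < x) (hy : 0 < y)
    (hfree : ∀ M, IsMaxBarrier w C M → (x, y) ∉ M) :
    ∃ u ∈ ({(x - 1, y), (x, y - 1)} : Set (ℤ × ℤ)),
      (∀ M, IsMaxBarrier w C M → u ∉ M) ∧ u ∈ C := by
  obtain ⟨hv1, hv2, hv3, hv4⟩ := hC hv
  simp only at hv1 hv2 hv3 hv4
  -- any free point of the square is in C
  have mem_C : ∀ u : ℤ × ℤ, u ∈ Sq w → (∀ M, IsMaxBarrier w C M → u ∉ M) → u ∈ C := by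
    intro u hu hf
    by_contra hc
    have hbar : IsBarrier w C {u} := by
      refine ⟨⟨u, rfl⟩, ⟨u.1, u.1, u.2, u.2, le_rfl, le_rfl, ?_⟩, ?_, ?_, ?_⟩
      · ext ⟨p1, p2⟩
        simp only [Set.mem_singleton_iff, Set.mem_setOf_eq, Prod.ext_iff]
        omega
      · intro p hp; rw [Set.mem_singleton_iff] at hp; rwa [hp]
      · rintro c ⟨p, hp, hpc⟩
        exact ⟨u, rfl, by rw [Set.mem_singleton_iff] at hp; rw [← hp, hpc], hc⟩
      · rintro r ⟨p, hp, hpr⟩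
        exact ⟨u, rfl, by rw [Set.mem_singleton_iff] at hp; rw [← hp, hpr], hc⟩
    obtain ⟨M, hM, hsub⟩ := exists_max_barrier w C _ hbar
    exact hf M hM (hsub rfl)
  -- key claim: one of the two points is free
  have key : (∀ M, IsMaxBarrier w C M → (x - 1, y) ∉ M) ∨
      (∀ M, IsMaxBarrier w C M → (x, y - 1) ∉ M) := by
    by_contra h
    push_neg at h
    obtain ⟨⟨M1, hM1, ha⟩, ⟨M2, hM2, hb⟩⟩ := h
    obtain ⟨hne1, ⟨a0, a1, b0, b1, hle1a, hle1b, he1⟩, hsub1, hcol1, hrow1⟩ := hM1.1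
    obtain ⟨hne2, ⟨c0, c1, d0, d1, hle2a, hle2b, he2⟩, hsub2, hcol2, hrow2⟩ := hM2.1
    have m1 : ∀ p : ℤ × ℤ, p ∈ M1 ↔ (a0 ≤ p.1 ∧ p.1 ≤ a1 ∧ b0 ≤ p.2 ∧ p.2 ≤ b1) := by
      intro p; rw [he1]; exact Iff.rfl
    have m2 : ∀ p : ℤ × ℤ, p ∈ M2 ↔ (c0 ≤ p.1 ∧ p.1 ≤ c1 ∧ d0 ≤ p.2 ∧ p.2 ≤ d1) := by
      intro p; rw [he2]; exact Iff.rfl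
    rw [m1] at ha
    rw [m2] at hb
    simp only at ha hb
    have hnf1 := hfree M1 hM1
    have hnf2 := hfree M2 hM2
    rw [m1] at hnf1; rw [m2] at hnf2
    simp only at hnf1 hnf2
    -- corner bounds
    obtain ⟨q1a, q1b, q1c, q1d⟩ := hsub1 ((m1 (a0, b0)).2 ⟨le_rfl, hle1a, le_rfl, hle1b⟩)
    obtain ⟨q2a, q2b, q2c, q2d⟩ := hsub1 ((m1 (a1, b1)).2 ⟨hle1a, le_rfl, hle1b, le_rfl⟩)
    obtain ⟨q3a, q3b, q3c, q3d⟩ := hsub2 ((m2 (c0, d0)).2 ⟨le_rfl, hle2a, le_rfl, hle2b⟩)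
    obtain ⟨q4a, q4b, q4c, q4d⟩ := hsub2 ((m2 (c1, d1)).2 ⟨hle2a, le_rfl, hle2b, le_rfl⟩)
    simp only at q1a q1b q1c q1d q2a q2b q2c q2d q3a q3b q3c q3d q4a q4b q4c q4d
    have ha1 : a1 = x - 1 := by omega
    have hd1 : d1 = y - 1 := by omega
    -- bounding box
    set B : Set (ℤ × ℤ) :=
      {p : ℤ × ℤ | min a0 c0 ≤ p.1 ∧ p.1 ≤ c1 ∧ min b0 d0 ≤ p.2 ∧ p.2 ≤ b1} with hB
    have hM1B : M1 ⊆ B := by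
      intro p hp; rw [m1] at hp
      exact ⟨by omega, by omega, by omega, by omega⟩
    have hM2B : M2 ⊆ B := by
      intro p hp; rw [m2] at hp
      exact ⟨by omega, by omega, by omega, by omega⟩
    have hxyB : (x, y) ∈ B := ⟨by simp; omega, by simp; omega, by simp; omega, by simp; omega⟩
    have hBbar : IsBarrier w C B := by
      refine ⟨⟨(x, y), hxyB⟩, ⟨min a0 c0, c1, min b0 d0, b1, by omega, by omega, rfl⟩,
        ?_, ?_, ?_⟩
      · rintro ⟨p1, p2⟩ ⟨k1, k2, k3, k4⟩
        simp only at k1 k2 k3 k4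
        exact ⟨by simp; omega, by simp; omega, by simp; omega, by simp; omega⟩
      · rintro c ⟨p, hp, hpc⟩
        obtain ⟨k1, k2, k3, k4⟩ := hp
        rw [hpc] at k1 k2
        have hcase : (a0 ≤ c ∧ c ≤ a1) ∨ (c0 ≤ c ∧ c ≤ c1) := by omega
        rcases hcase with ⟨l1, l2⟩ | ⟨l1, l2⟩
        · obtain ⟨q, hq, hqc, hqC⟩ :=
            hcol1 c ⟨(c, b0), (m1 (c, b0)).2 ⟨l1, l2, le_rfl, hle1b⟩, rfl⟩
          exact ⟨q, hM1B hq, hqc, hqC⟩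
        · obtain ⟨q, hq, hqc, hqC⟩ :=
            hcol2 c ⟨(c, d0), (m2 (c, d0)).2 ⟨l1, l2, le_rfl, hle2b⟩, rfl⟩
          exact ⟨q, hM2B hq, hqc, hqC⟩
      · rintro r ⟨p, hp, hpr⟩
        obtain ⟨k1, k2, k3, k4⟩ := hp
        rw [hpr] at k3 k4
        have hcase : (b0 ≤ r ∧ r ≤ b1) ∨ (d0 ≤ r ∧ r ≤ d1) := by omega
        rcases hcase with ⟨l1, l2⟩ | ⟨l1, l2⟩
        · obtain ⟨q, hq, hqr, hqC⟩ :=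
            hrow1 r ⟨(a0, r), (m1 (a0, r)).2 ⟨le_rfl, hle1a, l1, l2⟩, rfl⟩
          exact ⟨q, hM1B hq, hqr, hqC⟩
        · obtain ⟨q, hq, hqr, hqC⟩ :=
            hrow2 r ⟨(c0, r), (m2 (c0, r)).2 ⟨le_rfl, hle2a, l1, l2⟩, rfl⟩
          exact ⟨q, hM2B hq, hqr, hqC⟩
    obtain ⟨M, hM, hBM⟩ := exists_max_barrier w C B hBbar
    exact hfree M hM (hBM hxyB)
  rcases key with k | k
  · exact ⟨(x - 1, y), by simp, k,
      mem_C _ ⟨by simp; omega, by simp; omega, by simp; omega, by simp; omega⟩ k⟩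
  · exact ⟨(x, y - 1), by simp, k,
      mem_C _ ⟨by simp; omega, by simp; omega, by simp; omega, by simp; omega⟩ k⟩
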